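/- For every word w over Fin n there exists a unique word v such that v is canonical and v ~ w (v is Kiselman-equivalent to w). This unique v is called the canonical form of w. -/

import Mathlib

variable {n : ℕ}

/-- Generating relation of the Kiselman congruence on words over `Fin n`. -/
inductive KisStep : List (Fin n) → List (Fin n) → Prop
  | idem : ∀ (u v : List (Fin n)) (i : Fin n),
      KisStep (u ++ [i, i] ++ v) (u ++ [i] ++ v)
  | left : ∀ (u v : List (Fin n)) (i j : Fin n), i < j →
      KisStep (u ++ [i, j, i] ++ v) (u ++ [i, j] ++ v)
  | right : ∀ (u v : List (Fin n)) (i j : Fin n), i < j →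
      KisStep (u ++ [j, i, j] ++ v) (u ++ [i, j] ++ v)

/-- The Kiselman congruence: smallest equivalence relation containing `KisStep`. -/
def KisEquiv (x y : List (Fin n)) : Prop := Relation.EqvGen KisStep x y

/-- An infix `[i] ++ u ++ [i]` is special if `u` contains a letter `> i` and a letter `< i`. -/
def Special (i : Fin n) (u : List (Fin n)) : Prop :=
  (∃ j ∈ u, i < j) ∧ (∃ j ∈ u, j < i)

/-- A word is canonical if all its infixes of the form `[i] ++ u ++ [i]` are special. -/
def Canonical (w : List (Fin n)) : Prop :=
  ∀ (i : Fin n) (u : List (Fin n)), ([i] ++ u ++ [i]) <:+: w → Special i u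

/-- Delete all letters strictly smaller than `k`. -/
def filterGE (k : Fin n) (w : List (Fin n)) : List (Fin n) :=
  w.filter (fun a => decide (k ≤ a))

/-- `trunc i w` is the longest suffix of `w` with head `i`, or `[]` if `i ∉ w`. -/
def trunc (i : Fin n) : List (Fin n) → List (Fin n)
  | [] => []
  | a :: t => if a = i then a :: t else trunc i t

/-- Longest suffix of `w` whose head is `< k` (as a natural number), or `[]`. -/
def truncLtN (k : ℕ) : List (Fin n) → List (Fin n)
  | [] => []
  | a :: t => if (a : ℕ) < k then a :: t else truncLtN k t

/-- `join u v = u⁺ ++ v`, where `u⁻` is the longest suffix of `u` that is a sublist of `v`. -/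
def join : List (Fin n) → List (Fin n) → List (Fin n)
  | [], v => v
  | a :: t, v => if (a :: t).Sublist v then v else a :: join t v

/-- The local update function at vertex `i` of the update system `S_n^⋆`. -/
def Fstep (i : Fin n) (s : Fin n → List (Fin n)) : Fin n → List (Fin n) :=
  Function.update s i
    (i :: List.foldr join []
      ((((List.finRange n).filter (fun j => decide (i < j))).reverse).map s))

/-- The evolution induced by a word (rightmost letter acts first). -/
def Fword (w : List (Fin n)) (s : Fin n → List (Fin n)) : Fin n → List (Fin n) :=
  w.foldr Fstep s

/-- The initial system state `⋆`. -/
def starState : Fin n → List (Fin n) := fun _ => []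

/-! ### Auxiliary development: snapshot update system -/



inductive SnapT (n : ℕ) : Type
  | star : SnapT n
  | node : (Fin n → SnapT n) → SnapT n

def mask (i : Fin n) (s : Fin n → SnapT n) : Fin n → SnapT n :=
  fun j => if i < j then s j else SnapT.star

def SStep (i : Fin n) (s : Fin n → SnapT n) : Fin n → SnapT n :=
  Function.update s i (SnapT.node (mask i s))

def FS (w : List (Fin n)) (s : Fin n → SnapT n) : Fin n → SnapT n :=
  w.foldr SStep s

def star0 : Fin n → SnapT n := fun _ => SnapT.star

def S (w : List (Fin n)) : Fin n → SnapT n := FS w star0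

noncomputable def tsize : SnapT n → ℕ :=
  SnapT.rec 0 (fun _ ih => 1 + ∑ j, ih j)

@[simp] lemma tsize_star : tsize (SnapT.star : SnapT n) = 0 := rfl

@[simp] lemma tsize_node (f : Fin n → SnapT n) :
    tsize (SnapT.node f) = 1 + ∑ j, tsize (f j) := rfl

lemma FS_append (x y : List (Fin n)) (s : Fin n → SnapT n) :
    FS (x ++ y) s = FS x (FS y s) := List.foldr_append ..

@[simp] lemma FS_nil (s : Fin n → SnapT n) : FS [] s = s := rfl

@[simp] lemma FS_cons (c : Fin n) (w : List (Fin n)) (s : Fin n → SnapT n) :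
    FS (c :: w) s = SStep c (FS w s) := rfl

@[simp] lemma SStep_self (i : Fin n) (s : Fin n → SnapT n) :
    SStep i s i = SnapT.node (mask i s) := by
  simp [SStep]

lemma SStep_ne (i k : Fin n) (s : Fin n → SnapT n) (h : k ≠ i) :
    SStep i s k = s k := by
  simp [SStep, Function.update_of_ne h]

lemma mask_eq_of_agree {i : Fin n} {s t : Fin n → SnapT n}
    (h : ∀ j, i < j → s j = t j) : mask i s = mask i t := by
  funext j
  by_cases hj : i < j <;> simp [mask, hj, h]

lemma sstep_idem (i : Fin n) (s : Fin n → SnapT n) :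
    SStep i (SStep i s) = SStep i s := by
  funext k
  by_cases hk : k = i
  · subst hk
    simp only [SStep_self]
    congr 1
    exact mask_eq_of_agree fun j hj => SStep_ne _ _ _ (ne_of_gt hj)
  · rw [SStep_ne _ _ _ hk]

lemma sstep_iji {i j : Fin n} (hij : i < j) (s : Fin n → SnapT n) :
    SStep i (SStep j (SStep i s)) = SStep i (SStep j s) := by
  funext k
  by_cases hki : k = i
  · subst hki
    simp only [SStep_self]
    congr 1
    apply mask_eq_of_agree
    intro j' hj'
    by_cases hj'j : j' = j
    · subst hj'j
      rw [SStep_self, SStep_self]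
      congr 1
      apply mask_eq_of_agree
      intro j'' hj''
      exact SStep_ne _ _ _ (ne_of_gt (hij.trans hj''))
    · rw [SStep_ne _ _ _ hj'j, SStep_ne _ _ _ (ne_of_gt hj'), SStep_ne _ _ _ hj'j]
  · by_cases hkj : k = j
    · subst hkj
      rw [SStep_ne _ _ _ hki, SStep_self, SStep_ne _ _ _ hki, SStep_self]
      congr 1
      apply mask_eq_of_agree
      intro j'' hj''
      exact SStep_ne _ _ _ (ne_of_gt (hij.trans hj''))
    · rw [SStep_ne _ _ _ hki, SStep_ne _ _ _ hkj, SStep_ne _ _ _ hki,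
        SStep_ne _ _ _ hki, SStep_ne _ _ _ hkj]

lemma sstep_jij {i j : Fin n} (hij : i < j) (s : Fin n → SnapT n) :
    SStep j (SStep i (SStep j s)) = SStep i (SStep j s) := by
  funext k
  by_cases hkj : k = j
  · subst hkj
    rw [SStep_self, SStep_ne _ _ _ (ne_of_gt hij), SStep_self]
    congr 1
    apply mask_eq_of_agree
    intro j' hj'
    rw [SStep_ne _ _ _ (ne_of_gt (hij.trans hj')), SStep_ne _ _ _ (ne_of_gt hj')]
  · rw [SStep_ne _ _ _ hkj]



/-! ### Invariance of the snapshot evolution -/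

lemma step_inv {x y : List (Fin n)} (h : KisStep x y) (s : Fin n → SnapT n) :
    FS x s = FS y s := by
  cases h with
  | idem u v i =>
      rw [FS_append, FS_append, FS_append, FS_append]
      exact congrArg (FS u) (show FS [i, i] (FS v s) = FS [i] (FS v s) by simp [sstep_idem])
  | left u v i j hij =>
      rw [FS_append, FS_append, FS_append, FS_append]
      exact congrArg (FS u) (show FS [i, j, i] (FS v s) = FS [i, j] (FS v s) by simp [sstep_iji hij])
  | right u v i j hij =>
      rw [FS_append, FS_append, FS_append, FS_append]
      exact congrArg (FS u) (show FS [j, i, j] (FS v s) = FS [i, j] (FS v s) by simp [sstep_jij hij])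

lemma equiv_inv {x y : List (Fin n)} (h : KisEquiv x y) (s : Fin n → SnapT n) :
    FS x s = FS y s := by
  induction h with
  | rel a b hab => exact step_inv hab s
  | refl a => rfl
  | symm a b _ ih => exact ih.symm
  | trans a b c _ _ ih₁ ih₂ => exact ih₁.trans ih₂

/-! ### KisEquiv basics -/

lemma KisEquiv.refl' (x : List (Fin n)) : KisEquiv x x := Relation.EqvGen.refl x

lemma KisEquiv.symm' {x y : List (Fin n)} (h : KisEquiv x y) : KisEquiv y x :=
  Relation.EqvGen.symm _ _ h

lemma KisEquiv.trans' {x y z : List (Fin n)} (h₁ : KisEquiv x y) (h₂ : KisEquiv y z) :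
    KisEquiv x z := Relation.EqvGen.trans _ _ _ h₁ h₂

lemma kisStep_context {x y : List (Fin n)} (p q : List (Fin n)) (h : KisStep x y) :
    KisStep (p ++ x ++ q) (p ++ y ++ q) := by
  cases h with
  | idem u v i =>
      have := KisStep.idem (p ++ u) (v ++ q) i
      simpa [List.append_assoc] using this
  | left u v i j hij =>
      have := KisStep.left (p ++ u) (v ++ q) i j hij
      simpa [List.append_assoc] using this
  | right u v i j hij =>
      have := KisStep.right (p ++ u) (v ++ q) i j hij
      simpa [List.append_assoc] using this

lemma kisEquiv_context {x y : List (Fin n)} (p q : List (Fin n)) (h : KisEquiv x y) :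
    KisEquiv (p ++ x ++ q) (p ++ y ++ q) := by
  induction h with
  | rel a b hab => exact Relation.EqvGen.rel _ _ (kisStep_context p q hab)
  | refl a => exact KisEquiv.refl' _
  | symm a b _ ih => exact ih.symm'
  | trans a b c _ _ ih₁ ih₂ => exact ih₁.trans' ih₂

lemma kisStep_equiv {x y : List (Fin n)} (h : KisStep x y) : KisEquiv x y :=
  Relation.EqvGen.rel _ _ h

/-! ### Reduction lemmas -/

/-- If all letters of `u` are bigger than `i`, then `i u i ~ i u`. -/
lemma red_big (i : Fin n) :
    ∀ u : List (Fin n), (∀ x ∈ u, i < x) → KisEquiv ([i] ++ u ++ [i]) ([i] ++ u) := by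
  intro u
  induction u with
  | nil =>
      intro _
      have := KisStep.idem ([] : List (Fin n)) [] i
      simpa using kisStep_equiv this
  | cons j u ih =>
      intro hbig
      have hij : i < j := hbig j (by simp)
      have h1 : KisEquiv ([i] ++ (j :: u) ++ [i]) ([i, j, i] ++ u ++ [i]) := by
        have := KisStep.left ([] : List (Fin n)) (u ++ [i]) i j hij
        have h := (kisStep_equiv this).symm'
        simpa [List.append_assoc] using h
      have h2 : KisEquiv ([i, j, i] ++ u ++ [i]) ([i, j, i] ++ u) := by
        have := kisEquiv_context [i, j] [] (ih (fun x hx => hbig x (by simp [hx])))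
        simpa [List.append_assoc] using this
      have h3 : KisEquiv ([i, j, i] ++ u) ([i, j] ++ u) := by
        have := KisStep.left ([] : List (Fin n)) u i j hij
        simpa using kisStep_equiv this
      have : KisEquiv ([i] ++ (j :: u) ++ [i]) ([i, j] ++ u) := (h1.trans' h2).trans' h3
      simpa using this

/-- If all letters of `u` are smaller than `i`, then `i u i ~ u i`. -/
lemma red_small (i : Fin n) :
    ∀ u : List (Fin n), (∀ x ∈ u, x < i) → KisEquiv ([i] ++ u ++ [i]) (u ++ [i]) := by
  intro u
  induction u using List.reverseRecOn with
  | nil =>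
      intro _
      have := KisStep.idem ([] : List (Fin n)) [] i
      simpa using kisStep_equiv this
  | append_singleton u b ih =>
      intro hsmall
      have hbi : b < i := hsmall b (by simp)
      have h1 : KisEquiv ([i] ++ (u ++ [b]) ++ [i]) (([i] ++ u ++ [i]) ++ [b, i]) := by
        have := KisStep.right ([i] ++ u) ([] : List (Fin n)) b i hbi
        have h := (kisStep_equiv this).symm'
        simpa [List.append_assoc] using h
      have h2 : KisEquiv (([i] ++ u ++ [i]) ++ [b, i]) ((u ++ [i]) ++ [b, i]) := by
        have := kisEquiv_context [] [b, i] (ih (fun x hx => hsmall x (by simp [hx])))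
        simpa [List.append_assoc] using this
      have h3 : KisEquiv ((u ++ [i]) ++ [b, i]) ((u ++ [b]) ++ [i]) := by
        have := KisStep.right u ([] : List (Fin n)) b i hbi
        have h := kisStep_equiv this
        simpa [List.append_assoc] using h
      exact (h1.trans' h2).trans' h3

/-! ### Existence of canonical forms -/

lemma first_split {a : Fin n} {l : List (Fin n)} (h : a ∈ l) :
    ∃ s t, l = s ++ a :: t ∧ a ∉ s := by
  induction l with
  | nil => simp at h
  | cons c l ih =>
      by_cases hc : c = a
      · exact ⟨[], l, by simp [hc], by simp⟩
      · have h' : a ∈ l := by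
          rcases List.mem_cons.mp h with h | h
          · exact absurd h.symm hc
          · exact h
        rcases ih h' with ⟨s, t, rfl, hns⟩
        exact ⟨c :: s, t, rfl, by simp [hns, Ne.symm hc]⟩

lemma bad_infix_refine :
    ∀ (m : ℕ) (w : List (Fin n)) (i : Fin n) (u : List (Fin n)), u.length ≤ m →
      ([i] ++ u ++ [i]) <:+: w → ¬ Special i u →
      ∃ (i' : Fin n) (u' : List (Fin n)), ([i'] ++ u' ++ [i']) <:+: w ∧ i' ∉ u' ∧ ¬ Special i' u' := by
  intro m
  induction m with
  | zero =>
      intro w i u hlen hinf hsp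
      have : u = [] := List.length_eq_zero_iff.mp (Nat.le_zero.mp hlen)
      exact ⟨i, u, hinf, by simp [this], hsp⟩
  | succ m ih =>
      intro w i u hlen hinf hsp
      by_cases hmem : i ∈ u
      · rcases first_split hmem with ⟨s, t, rfl, hns⟩
        have hinf' : ([i] ++ s ++ [i]) <:+: w := by
          rcases hinf with ⟨p, q, hpq⟩
          exact ⟨p, t ++ [i] ++ q, by rw [← hpq]; simp⟩
        have hsp' : ¬ Special i s := by
          intro ⟨⟨x, hx, hix⟩, ⟨y, hy, hyi⟩⟩
          exact hsp ⟨⟨x, by simp [hx], hix⟩, ⟨y, by simp [hy], hyi⟩⟩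
        have hlen' : s.length ≤ m := by
          have := hlen
          simp [List.length_append] at this
          omega
        exact ih w i s hlen' hinf' hsp'
      · exact ⟨i, u, hinf, hmem, hsp⟩

lemma noncanonical_decomp {w : List (Fin n)} (h : ¬ Canonical w) :
    ∃ (p : List (Fin n)) (i : Fin n) (u q : List (Fin n)),
      w = p ++ [i] ++ u ++ [i] ++ q ∧ i ∉ u ∧
      ((∀ x ∈ u, i < x) ∨ (∀ x ∈ u, x < i)) := by
  rw [Canonical] at h
  push_neg at h
  obtain ⟨i, u, hinf, hsp⟩ := h
  obtain ⟨i', u', hinf', hnmem, hsp'⟩ := bad_infix_refine u.length w i u le_rfl hinf hsp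
  rcases hinf' with ⟨p, q, hpq⟩
  refine ⟨p, i', u', q, by rw [← hpq]; simp, hnmem, ?_⟩
  rw [Special] at hsp'
  push_neg at hsp'
  by_cases hbig : ∃ x ∈ u', i' < x
  · left
    intro x hx
    have hle : i' ≤ x := hsp' hbig x hx
    exact lt_of_le_of_ne hle (fun h => hnmem (h ▸ hx))
  · right
    intro x hx
    push_neg at hbig
    exact lt_of_le_of_ne (hbig x hx) (fun h => hnmem (h ▸ hx))


theorem exists_canonical (w : List (Fin n)) : ∃ c : List (Fin n), Canonical c ∧ KisEquiv c w := by
  have main : ∀ (m : ℕ) (w : List (Fin n)), w.length ≤ m →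
      ∃ c : List (Fin n), Canonical c ∧ KisEquiv c w := by
    intro m
    induction m with
    | zero =>
        intro w hw
        have : w = [] := List.length_eq_zero_iff.mp (Nat.le_zero.mp hw)
        subst this
        refine ⟨[], ?_, KisEquiv.refl' []⟩
        intro i u hinf
        rcases hinf with ⟨s, t, hst⟩
        simp at hst
    | succ m ih =>
        intro w hw
        by_cases hcan : Canonical w
        · exact ⟨w, hcan, KisEquiv.refl' w⟩
        · obtain ⟨p, i, u, q, hdec, hnmem, hcase⟩ := noncanonical_decomp hcan
          rcases hcase with hbig | hsmall
          · have hred : KisEquiv w (p ++ ([i] ++ u) ++ q) := by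
              have h := kisEquiv_context p q (red_big i u hbig)
              rw [hdec]
              simpa [List.append_assoc] using h
            have hlen : (p ++ ([i] ++ u) ++ q).length ≤ m := by
              have := hw
              rw [hdec] at this
              simp [List.length_append] at this ⊢
              omega
            obtain ⟨c, hc, hcw⟩ := ih _ hlen
            exact ⟨c, hc, hcw.trans' hred.symm'⟩
          · have hred : KisEquiv w (p ++ (u ++ [i]) ++ q) := by
              have h := kisEquiv_context p q (red_small i u hsmall)
              rw [hdec]
              simpa [List.append_assoc] using h
            have hlen : (p ++ (u ++ [i]) ++ q).length ≤ m := by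
              have := hw
              rw [hdec] at this
              simp [List.length_append] at this ⊢
              omega
            obtain ⟨c, hc, hcw⟩ := ih _ hlen
            exact ⟨c, hc, hcw.trans' hred.symm'⟩
  exact main w.length w le_rfl

/-! ### State structure lemmas -/

lemma S_of_not_mem {i : Fin n} : ∀ {w : List (Fin n)}, i ∉ w → S w i = SnapT.star := by
  intro w
  induction w with
  | nil => intro _; rfl
  | cons c w ih =>
      intro h
      have hci : i ≠ c := fun hh => h (by simp [hh])
      show SStep c (S w) i = SnapT.star
      rw [SStep_ne _ _ _ hci]
      exact ih (fun hh => h (by simp [hh]))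

lemma S_firstOcc {i : Fin n} : ∀ {p : List (Fin n)} (y : List (Fin n)), i ∉ p →
    S (p ++ i :: y) i = SnapT.node (mask i (S y)) := by
  intro p
  induction p with
  | nil =>
      intro y _
      show SStep i (S y) i = _
      rw [SStep_self]
  | cons c p ih =>
      intro y h
      have hci : i ≠ c := fun hh => h (by simp [hh])
      show SStep c (S (p ++ i :: y)) i = _
      rw [SStep_ne _ _ _ hci]
      exact ih y (fun hh => h (by simp [hh]))

lemma S_ne_star_of_mem {i : Fin n} {w : List (Fin n)} (h : i ∈ w) : S w i ≠ SnapT.star := by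
  obtain ⟨p, y, rfl, hnp⟩ := first_split h
  rw [S_firstOcc y hnp]
  exact fun hh => by cases hh

lemma mem_iff_ne_star {i : Fin n} {w : List (Fin n)} : i ∈ w ↔ S w i ≠ SnapT.star := by
  constructor
  · exact S_ne_star_of_mem
  · intro h
    by_contra hmem
    exact h (S_of_not_mem hmem)

/-! ### Size monotonicity -/

def BND (s : Fin n → SnapT n) : Prop :=
  ∀ i : Fin n, tsize (s i) ≤ 1 + ∑ j, tsize (mask i s j)

lemma bnd_star0 : BND (star0 : Fin n → SnapT n) := by
  intro i
  simp [star0]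

lemma sstep_mono {s : Fin n → SnapT n} (h : BND s) (i k : Fin n) :
    tsize (s k) ≤ tsize (SStep i s k) := by
  by_cases hk : k = i
  · subst hk
    rw [SStep_self, tsize_node]
    exact h k
  · rw [SStep_ne _ _ _ hk]

lemma mask_sstep_self (i : Fin n) (s : Fin n → SnapT n) :
    mask i (SStep i s) = mask i s :=
  mask_eq_of_agree fun j hj => SStep_ne _ _ _ (ne_of_gt hj)

lemma bnd_sstep {s : Fin n → SnapT n} (h : BND s) (i : Fin n) : BND (SStep i s) := by
  intro k
  by_cases hk : k = i
  · subst hk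
    rw [SStep_self, tsize_node, mask_sstep_self]
  · rw [SStep_ne _ _ _ hk]
    calc tsize (s k) ≤ 1 + ∑ j, tsize (mask k s j) := h k
    _ ≤ 1 + ∑ j, tsize (mask k (SStep i s) j) := by
        gcongr with j
        by_cases hj : k < j
        · simp only [mask, if_pos hj]
          exact sstep_mono h i j
        · simp [mask, hj]

lemma bnd_S (w : List (Fin n)) : BND (S w) := by
  induction w with
  | nil => exact bnd_star0
  | cons c w ih => exact bnd_sstep ih c

lemma mono_S (x y : List (Fin n)) (k : Fin n) :
    tsize (S y k) ≤ tsize (S (x ++ y) k) := by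
  induction x with
  | nil => simp
  | cons c x ih =>
      calc tsize (S y k) ≤ tsize (S (x ++ y) k) := ih
      _ ≤ tsize (SStep c (S (x ++ y)) k) := sstep_mono (bnd_S _) c k
      _ = tsize (S ((c :: x) ++ y) k) := rfl

/-! ### Strict growth of write sizes in canonical words -/

@[simp] lemma S_write (f : Fin n) (y : List (Fin n)) :
    S ([f] ++ y) f = SnapT.node (mask f (S y)) := by
  show SStep f (S y) f = _
  rw [SStep_self]

set_option maxHeartbeats 1000000 in
theorem Lgrow (w : List (Fin n)) (hw : Canonical w) (f : Fin n) (p z y : List (Fin n))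
    (hdec : w = p ++ [f] ++ z ++ [f] ++ y) :
    tsize (S ([f] ++ y) f) < tsize (S ([f] ++ z ++ [f] ++ y) f) := by
  by_cases hfz : f ∈ z
  · obtain ⟨z₁, z₂, hzs, -⟩ := first_split hfz
    have h2 : tsize (S ([f] ++ y) f) < tsize (S ([f] ++ z₂ ++ [f] ++ y) f) :=
      Lgrow w hw f (p ++ [f] ++ z₁) z₂ y (by rw [hdec, hzs]; simp [List.append_assoc])
    have h1 : tsize (S ([f] ++ (z₂ ++ [f] ++ y)) f)
        < tsize (S ([f] ++ z₁ ++ [f] ++ (z₂ ++ [f] ++ y)) f) :=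
      Lgrow w hw f p z₁ (z₂ ++ [f] ++ y) (by rw [hdec, hzs]; simp [List.append_assoc])
    have e1 : [f] ++ (z₂ ++ [f] ++ y) = [f] ++ z₂ ++ [f] ++ y := by simp [List.append_assoc]
    have e2 : [f] ++ z₁ ++ [f] ++ (z₂ ++ [f] ++ y) = [f] ++ (z₁ ++ f :: z₂) ++ [f] ++ y := by
      simp [List.append_assoc]
    rw [e1, e2] at h1
    rw [hzs]
    exact h2.trans h1
  · have hinf : ([f] ++ z ++ [f]) <:+: w :=
      ⟨p, y, by rw [hdec]; simp [List.append_assoc]⟩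
    obtain ⟨g, hgz, hfg⟩ := (hw f z hinf).1
    obtain ⟨c₁, c₂, rfl, hgc₁⟩ := first_split hgz
    have eL : [f] ++ (c₁ ++ g :: c₂) ++ [f] ++ y = [f] ++ ((c₁ ++ g :: c₂) ++ [f] ++ y) := by
      simp [List.append_assoc]
    rw [eL, S_write, S_write, tsize_node, tsize_node]
    have key : tsize (S y g) < tsize (S ((c₁ ++ g :: c₂) ++ [f] ++ y) g) := by
      have hSfo : S ((c₁ ++ g :: c₂) ++ [f] ++ y) g
          = SnapT.node (mask g (S (c₂ ++ [f] ++ y))) := by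
        have : (c₁ ++ g :: c₂) ++ [f] ++ y = c₁ ++ g :: (c₂ ++ [f] ++ y) := by
          simp [List.append_assoc]
        rw [this, S_firstOcc _ hgc₁]
      by_cases hgy : g ∈ y
      · obtain ⟨d₁, d₂, rfl, hgd₁⟩ := first_split hgy
        have hrec : tsize (S ([g] ++ d₂) g)
            < tsize (S ([g] ++ (c₂ ++ [f] ++ d₁) ++ [g] ++ d₂) g) :=
          Lgrow w hw g (p ++ [f] ++ c₁) (c₂ ++ [f] ++ d₁) d₂
            (by rw [hdec]; simp [List.append_assoc])
        have e3 : S (d₁ ++ g :: d₂) g = S ([g] ++ d₂) g := by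
          rw [S_firstOcc _ hgd₁, S_write]
        have e4 : S ([g] ++ (c₂ ++ [f] ++ d₁) ++ [g] ++ d₂) g
            = S ((c₁ ++ g :: c₂) ++ [f] ++ (d₁ ++ g :: d₂)) g := by
          rw [hSfo]
          have : [g] ++ (c₂ ++ [f] ++ d₁) ++ [g] ++ d₂
              = [] ++ g :: ((c₂ ++ [f] ++ d₁) ++ [g] ++ d₂) := by simp [List.append_assoc]
          rw [this, S_firstOcc _ (by simp : g ∉ ([] : List (Fin n)))]
          congr 2
          simp [List.append_assoc]
        rw [e3] at *
        rw [e4] at hrec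
        exact hrec
      · rw [S_of_not_mem hgy, hSfo, tsize_star, tsize_node]
        omega
    have hle : ∀ j, tsize (mask f (S y) j) ≤ tsize (mask f (S ((c₁ ++ g :: c₂) ++ [f] ++ y)) j) := by
      intro j
      by_cases hj : f < j
      · simp only [mask, if_pos hj]
        have : (c₁ ++ g :: c₂) ++ [f] ++ y = ((c₁ ++ g :: c₂) ++ [f]) ++ y := by
          simp [List.append_assoc]
        rw [this]
        exact mono_S _ _ _
      · simp [mask, hj]
    have hsum : ∑ j, tsize (mask f (S y) j)
        < ∑ j, tsize (mask f (S ((c₁ ++ g :: c₂) ++ [f] ++ y)) j) := by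
      apply Finset.sum_lt_sum (fun j _ => hle j)
      refine ⟨g, Finset.mem_univ g, ?_⟩
      simp only [mask, if_pos hfg]
      exact key
    omega
termination_by (n - f.val, z.length)
decreasing_by
  · apply Prod.Lex.right
    rw [hzs]
    simp only [List.length_append, List.length_cons]
    omega
  · apply Prod.Lex.right
    rw [hzs]
    simp only [List.length_append, List.length_cons]
    omega
  · apply Prod.Lex.left
    have h1 : (f : ℕ) < (g : ℕ) := hfg
    have h2 := g.isLt
    omega

/-! ### Head characterization -/

def Fresh (s : Fin n → SnapT n) (a : Fin n) : Prop := s a = SnapT.node (mask a s)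

lemma fresh_head (a : Fin n) (v : List (Fin n)) : Fresh (S (a :: v)) a := by
  show SStep a (S v) a = SnapT.node (mask a (SStep a (S v)))
  rw [SStep_self, mask_sstep_self]

lemma head_min {a : Fin n} {v : List (Fin n)} (hw : Canonical (a :: v))
    {i : Fin n} (hia : i < a) : ¬ Fresh (S (a :: v)) i := by
  intro hF
  have hiv : i ∈ (a :: v) := by
    rw [mem_iff_ne_star, hF]
    exact fun h => by cases h
  have hine : i ≠ a := ne_of_lt hia
  have hivv : i ∈ v := by
    rcases List.mem_cons.mp hiv with h | h
    · exact absurd h hine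
    · exact h
  obtain ⟨p₂, y, hv, hnp⟩ := first_split hivv
  have hSwi : S (a :: v) i = SnapT.node (mask i (S y)) := by
    have : a :: v = (a :: p₂) ++ i :: y := by rw [hv]; rfl
    rw [this, S_firstOcc _ (by
      intro h
      rcases List.mem_cons.mp h with h | h
      · exact hine h
      · exact hnp h)]
  have hmeq : mask i (S y) = mask i (S (a :: v)) := by
    have := hSwi.symm.trans hF
    exact SnapT.node.inj this
  have hya : S y a = S (a :: v) a := by
    have := congrFun hmeq a
    simpa [mask, hia] using this
  have hSwa : S (a :: v) a = SnapT.node (mask a (S v)) := by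
    show SStep a (S v) a = _
    rw [SStep_self]
  by_cases hay : a ∈ y
  · obtain ⟨q, r, hy, hnq⟩ := first_split hay
    have hlt : tsize (S ([a] ++ r) a) < tsize (S ([a] ++ (p₂ ++ [i] ++ q) ++ [a] ++ r) a) :=
      Lgrow (a :: v) hw a [] (p₂ ++ [i] ++ q) r
        (by rw [hv, hy]; simp [List.append_assoc])
    have he : [a] ++ (p₂ ++ [i] ++ q) ++ [a] ++ r = a :: v := by
      rw [hv, hy]; simp [List.append_assoc]
    rw [he] at hlt
    have hyaa : S y a = S ([a] ++ r) a := by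
      rw [hy, S_firstOcc _ hnq, S_write]
    rw [← hyaa, hya] at hlt
    exact lt_irrefl _ hlt
  · rw [S_of_not_mem hay] at hya
    rw [hSwa] at hya
    cases hya

/-! ### Reconstruction of the tail state -/

lemma PC {a : Fin n} {v : List (Fin n)} (hw : Canonical (a :: v))
    {b : Fin n} (hba : b < a) {fb : Fin n → SnapT n}
    (hSb : S (a :: v) b = SnapT.node fb) (hfa : fb a ≠ SnapT.star) :
    a ∈ v ∧ (fb a = S v a ∨ tsize (fb a) < tsize (S v a)) := by
  have hbne : b ≠ a := ne_of_lt hba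
  have hSvb : S v b = SnapT.node fb := by
    rw [← hSb]
    exact (SStep_ne a b (S v) hbne).symm
  have hbv : b ∈ v := by
    rw [mem_iff_ne_star, hSvb]
    exact fun h => by cases h
  obtain ⟨p₂, y, hv, hnp⟩ := first_split hbv
  have hfb : fb = mask b (S y) := by
    have : S v b = SnapT.node (mask b (S y)) := by rw [hv, S_firstOcc _ hnp]
    exact (SnapT.node.inj (this.symm.trans hSvb)).symm
  have hfba : fb a = S y a := by rw [hfb]; simp [mask, hba]
  have hay : a ∈ y := by
    rw [mem_iff_ne_star]
    rw [hfba] at hfa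
    exact hfa
  obtain ⟨q, r, hy, hnq⟩ := first_split hay
  have hfba2 : fb a = SnapT.node (mask a (S r)) := by
    rw [hfba, hy, S_firstOcc _ hnq]
  have hav : a ∈ v := by
    rw [hv, hy]
    simp
  refine ⟨hav, ?_⟩
  by_cases hap : a ∈ p₂
  · right
    obtain ⟨p₃, p₄, hp, hnp₃⟩ := first_split hap
    have hSva : S v a = SnapT.node (mask a (S (p₄ ++ b :: y))) := by
      have : v = p₃ ++ a :: (p₄ ++ b :: y) := by rw [hv, hp]; simp
      rw [this, S_firstOcc _ hnp₃]
    have hlt : tsize (S ([a] ++ r) a)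
        < tsize (S ([a] ++ (p₄ ++ [b] ++ q) ++ [a] ++ r) a) :=
      Lgrow (a :: v) hw a (a :: p₃) (p₄ ++ [b] ++ q) r
        (by rw [hv, hp, hy]; simp [List.append_assoc])
    have he1 : S ([a] ++ r) a = fb a := by rw [S_write, hfba2]
    have he2 : S ([a] ++ (p₄ ++ [b] ++ q) ++ [a] ++ r) a = S v a := by
      have : [a] ++ (p₄ ++ [b] ++ q) ++ [a] ++ r
          = [a] ++ ((p₄ ++ [b] ++ q) ++ [a] ++ r) := by simp [List.append_assoc]
      rw [this, S_write, hSva]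
      congr 2
      rw [hy]
      simp [List.append_assoc]
    rw [he1, he2] at hlt
    exact hlt
  · left
    have hnaq : a ∉ (p₂ ++ b :: q) := by
      intro h
      rcases List.mem_append.mp h with h | h
      · exact hap h
      · rcases List.mem_cons.mp h with h | h
        · exact hbne h.symm
        · exact hnq h
    have : v = (p₂ ++ b :: q) ++ a :: r := by rw [hv, hy]; simp
    rw [this, S_firstOcc _ hnaq, hfba2]

lemma PE {a : Fin n} {v : List (Fin n)} (hw : Canonical (a :: v)) (hav : a ∈ v) :
    ∃ (b : Fin n) (fb : Fin n → SnapT n), b < a ∧ S (a :: v) b = SnapT.node fb ∧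
      fb a = S v a ∧ fb a ≠ SnapT.star := by
  obtain ⟨g, r, hv, hng⟩ := first_split hav
  have hinf : ([a] ++ g ++ [a]) <:+: (a :: v) := ⟨[], r, by rw [hv]; simp⟩
  obtain ⟨b, hbg, hba⟩ := (hw a g hinf).2
  have hbv : b ∈ v := by rw [hv]; exact List.mem_append.mpr (Or.inl hbg)
  obtain ⟨p₂, y, hv2, hnp⟩ := first_split hbv
  have hpre1 : (p₂ ++ [b]) <+: v := ⟨y, by rw [hv2]; simp⟩
  have hpre2 : g <+: v := ⟨a :: r, by rw [hv]⟩
  have hpre0 : p₂ <+: v := ⟨b :: y, by rw [hv2]⟩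
  have hlen : (p₂ ++ [b]).length ≤ g.length := by
    by_contra hcon
    push_neg at hcon
    have hle : g.length ≤ p₂.length := by
      simp [List.length_append] at hcon
      omega
    have hgp : g <+: p₂ := List.prefix_of_prefix_length_le hpre2 hpre0 hle
    exact hnp (hgp.subset hbg)
  obtain ⟨g', hg'⟩ := List.prefix_of_prefix_length_le hpre1 hpre2 hlen
  have hgeq : g = p₂ ++ [b] ++ g' := hg'.symm
  have hnag' : a ∉ g' := fun h => hng (by rw [hgeq]; simp [h])
  have hy : y = g' ++ a :: r := by
    have h1 : p₂ ++ b :: y = p₂ ++ b :: (g' ++ a :: r) := by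
      rw [← hv2, hv, hgeq]; simp
    have := List.append_cancel_left h1
    exact (List.cons.inj this).2
  have hbne : b ≠ a := ne_of_lt hba
  refine ⟨b, mask b (S y), hba, ?_, ?_, ?_⟩
  · show SStep a (S v) b = _
    rw [SStep_ne _ _ _ hbne, hv2, S_firstOcc _ hnp]
  · have h1 : mask b (S y) a = S y a := by simp [mask, hba]
    have h2 : S y a = SnapT.node (mask a (S r)) := by
      rw [hy, S_firstOcc _ hnag']
    have h3 : S v a = SnapT.node (mask a (S r)) := by
      rw [hv, S_firstOcc _ hng]
    rw [h1, h2, h3]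
  · have h1 : mask b (S y) a = S y a := by simp [mask, hba]
    have h2 : S y a = SnapT.node (mask a (S r)) := by
      rw [hy, S_firstOcc _ hnag']
    rw [h1, h2]
    exact fun h => by cases h

lemma patch {a : Fin n} {v v' : List (Fin n)} (hw : Canonical (a :: v))
    (hw' : Canonical (a :: v')) (hS : S (a :: v) = S (a :: v')) : S v = S v' := by
  funext k
  by_cases hk : k = a
  · subst hk
    by_cases hav : k ∈ v
    · obtain ⟨b, fb, hba, hSb, hfba, hne⟩ := PE hw hav
      rw [hS] at hSb
      obtain ⟨hav', hd'⟩ := PC hw' hba hSb hne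
      obtain ⟨b', fb', hba', hSb2, hfba', hne'⟩ := PE hw' hav'
      rw [← hS] at hSb2
      obtain ⟨-, hd⟩ := PC hw hba' hSb2 hne'
      rcases hd' with h | h
      · rw [← hfba, h]
      · rcases hd with h2 | h2
        · rw [← h2, hfba']
        · exfalso
          rw [hfba] at h
          rw [hfba'] at h2
          omega
    · have hav' : k ∉ v' := by
        intro hav'
        obtain ⟨b, fb, hba, hSb, hfba, hne⟩ := PE hw' hav'
        rw [← hS] at hSb
        exact hav (PC hw hba hSb hne).1
      rw [S_of_not_mem hav, S_of_not_mem hav']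
  · have h1 : S v k = S (a :: v) k := (SStep_ne a k (S v) hk).symm
    have h2 : S v' k = S (a :: v') k := (SStep_ne a k (S v') hk).symm
    rw [h1, h2, hS]

lemma canonical_tail {a : Fin n} {v : List (Fin n)} (h : Canonical (a :: v)) :
    Canonical v := by
  intro i u hinf
  rcases hinf with ⟨s, t, hst⟩
  exact h i u ⟨a :: s, t, by rw [← hst]; rfl⟩

theorem snap_inj : ∀ (v v' : List (Fin n)), Canonical v → Canonical v' →
    S v = S v' → v = v' := by
  intro v
  induction v with
  | nil =>
      intro v' _ _ hS
      cases v' with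
      | nil => rfl
      | cons b t =>
          exfalso
          have : S (b :: t) b ≠ SnapT.star := S_ne_star_of_mem (by simp)
          rw [← hS] at this
          exact this rfl
  | cons a t ih =>
      intro v' hw hw' hS
      cases v' with
      | nil =>
          exfalso
          have : S (a :: t) a ≠ SnapT.star := S_ne_star_of_mem (by simp)
          rw [hS] at this
          exact this rfl
      | cons a' t' =>
          have haa : a = a' := by
            by_contra hne
            rcases lt_or_gt_of_ne hne with h | h
            · have hfa : Fresh (S (a' :: t')) a := by
                rw [← hS]; exact fresh_head a t
              exact head_min hw' h hfa
            · have hfa : Fresh (S (a :: t)) a' := by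
                rw [hS]; exact fresh_head a' t'
              exact head_min hw h hfa
          subst haa
          have hSt : S t = S t' := patch hw hw' hS
          rw [ih t' (canonical_tail hw) (canonical_tail hw') hSt]

theorem stmt_1 {n : ℕ} (hn : 1 ≤ n) (w : List (Fin n)) :
    ∃! v : List (Fin n), Canonical v ∧ KisEquiv v w := by
  obtain ⟨c, hc, hcw⟩ := exists_canonical w
  refine ⟨c, ⟨hc, hcw⟩, ?_⟩
  rintro y ⟨hy, hyw⟩
  have hyc : KisEquiv y c := hyw.trans' hcw.symm'
  exact snap_inj y c hy hc (equiv_inv hyc star0)
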